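/- A value Φ on TU games with player set N satisfies efficiency, symmetry, linearity, and the k-nullifying null player property if and only if Φ = Φ^{k-SED}. -/

import Mathlib

open Finset

/-- The Shapley value of player `i` in the TU game `v` on player set `Fin n`. -/
noncomputable def shapley (n : ℕ) (v : Finset (Fin n) → ℝ) (i : Fin n) : ℝ :=
  ∑ S ∈ (Finset.univ.erase i).powerset,
      ((S.card.factorial * (n - S.card - 1).factorial : ℝ) / n.factorial) *
        (v (insert i S) - v S)

/-- The `k`-SED value of player `i` in the TU game `v` on player set `Fin n`. -/
noncomputable def kSED (n k : ℕ) (v : Finset (Fin n) → ℝ) (i : Fin n) : ℝ :=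
  (∑ S ∈ ((Finset.univ.erase i).powerset.filter (fun S => S.card = k - 1)),
      (((n - k).factorial * (k - 1).factorial : ℝ) / n.factorial) * v (insert i S))
  + ∑ S ∈ ((Finset.univ.erase i).powerset.filter (fun S => k ≤ S.card)),
      (((n - S.card - 1).factorial * S.card.factorial : ℝ) / n.factorial) *
        (v (insert i S) - v S)


variable {n : ℕ}

noncomputable def deltaG (T : Finset (Fin n)) : Finset (Fin n) → ℝ :=
  fun S => if S = T then 1 else 0

noncomputable def unaG (T : Finset (Fin n)) : Finset (Fin n) → ℝ :=
  fun S => if T ⊆ S then 1 else 0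

noncomputable def bas (k : ℕ) (T : Finset (Fin n)) : Finset (Fin n) → ℝ :=
  if T.card < k then deltaG T else unaG T

noncomputable def coefG (k : ℕ) (v : Finset (Fin n) → ℝ) (T : Finset (Fin n)) : ℝ :=
  if T.card < k then v T
  else ∑ R ∈ T.powerset.filter (fun R => k ≤ R.card), (-1:ℝ)^(T.card - R.card) * v R

def idx (n : ℕ) : Finset (Finset (Fin n)) := univ.powerset.filter (fun T => T.Nonempty)

noncomputable def pv (k : ℕ) (T : Finset (Fin n)) (i : Fin n) : ℝ :=
  if k ≤ T.card ∧ i ∈ T then 1/(T.card : ℝ) else 0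

lemma bas_of_lt {k : ℕ} {T : Finset (Fin n)} (h : T.card < k) : bas k T = deltaG T := if_pos h

lemma bas_of_le {k : ℕ} {T : Finset (Fin n)} (h : ¬ T.card < k) : bas k T = unaG T := if_neg h

lemma bas_empty (k : ℕ) (T : Finset (Fin n)) (hT : T ∈ idx n) : bas k T ∅ = 0 := by
  obtain ⟨x, hx⟩ := (mem_filter.1 hT).2
  unfold bas deltaG unaG
  split
  · exact if_neg (fun h => by simp [← h] at hx)
  · exact if_neg (fun h => by exact absurd (h hx) (notMem_empty x))

lemma not_mem_of_ps_erase {S : Finset (Fin n)} {i : Fin n}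
    (h : S ∈ (univ.erase i).powerset) : i ∉ S :=
  fun hi => (notMem_erase i univ) (mem_powerset.1 h hi)

lemma decompG (k : ℕ) (hk : 1 ≤ k) (v : Finset (Fin n) → ℝ) (hv : v ∅ = 0)
    (S : Finset (Fin n)) : v S = ∑ T ∈ idx n, coefG k v T * bas k T S := by
  by_cases h : S.card < k
  · rw [Finset.sum_eq_single S]
    · unfold coefG bas deltaG
      rw [if_pos h, if_pos h, if_pos rfl, mul_one]
    · intro T hT hTS
      unfold coefG bas deltaG unaG
      by_cases h2 : T.card < k
      · rw [if_pos h2, if_pos h2, if_neg (fun hh => hTS hh.symm), mul_zero]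
      · rw [if_neg h2, if_neg h2, if_neg, mul_zero]
        intro hsub
        exact h2 (lt_of_le_of_lt (card_le_card hsub) h)
    · intro hS
      have hSe : S = ∅ := by
        by_contra hne
        exact hS (mem_filter.2 ⟨mem_powerset.2 (subset_univ S), nonempty_iff_ne_empty.2 hne⟩)
      subst hSe
      unfold coefG bas deltaG
      rw [if_pos h, if_pos h, if_pos rfl, mul_one, hv]
  · push_neg at h
    have hstep : ∑ T ∈ idx n, coefG k v T * bas k T S
        = ∑ T ∈ S.powerset.filter (fun T => k ≤ T.card),
            ∑ R ∈ T.powerset.filter (fun R => k ≤ R.card), (-1:ℝ)^(T.card - R.card) * v R := by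
      rw [← Finset.sum_subset (s₁ := S.powerset.filter (fun T => k ≤ T.card))]
      · apply Finset.sum_congr rfl
        intro T hT
        rw [mem_filter, mem_powerset] at hT
        unfold coefG bas unaG
        rw [if_neg (not_lt.2 hT.2), if_neg (not_lt.2 hT.2), if_pos hT.1, mul_one]
      · intro T hT
        rw [mem_filter, mem_powerset] at hT
        refine mem_filter.2 ⟨mem_powerset.2 (hT.1.trans (subset_univ S)), ?_⟩
        exact card_pos.1 (lt_of_lt_of_le (by omega) hT.2)
      · intro T hT hT2
        rw [mem_filter, mem_powerset] at hT2
        unfold coefG bas deltaG unaG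
        by_cases h2 : T.card < k
        · rw [if_pos h2, if_pos h2, if_neg, mul_zero]
          intro hh; rw [hh] at h; omega
        · rw [if_neg h2, if_neg h2, if_neg, mul_zero]
          intro hsub
          exact hT2 ⟨hsub, not_lt.1 h2⟩
    rw [hstep]
    rw [Finset.sum_comm' (s' := fun R => S.powerset.filter (fun T => R ⊆ T))
        (t' := S.powerset.filter (fun R => k ≤ R.card))]
    · have hinner : ∀ R ∈ S.powerset.filter (fun R => k ≤ R.card),
          ∑ T ∈ S.powerset.filter (fun T => R ⊆ T), (-1:ℝ)^(T.card - R.card) * v R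
          = (if S = R then 1 else 0) * v R := by
        intro R hR
        rw [mem_filter, mem_powerset] at hR
        rw [← Finset.sum_mul]
        congr 1
        have hre : ∑ T ∈ S.powerset.filter (fun T => R ⊆ T), (-1:ℝ)^(T.card - R.card)
            = ∑ E ∈ (S \ R).powerset, (-1:ℝ)^E.card := by
          refine Finset.sum_nbij' (fun T => T \ R) (fun E => R ∪ E) ?_ ?_ ?_ ?_ ?_
          · intro T hT
            rw [mem_filter, mem_powerset] at hT
            exact mem_powerset.2 (sdiff_subset_sdiff hT.1 (Finset.Subset.refl R))
          · intro E hE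
            rw [mem_powerset] at hE
            exact mem_filter.2 ⟨mem_powerset.2 (union_subset hR.1 (hE.trans sdiff_subset)),
              subset_union_left⟩
          · intro T hT
            rw [mem_filter, mem_powerset] at hT
            exact union_sdiff_of_subset hT.2
          · intro E hE
            rw [mem_powerset] at hE
            exact union_sdiff_cancel_left (disjoint_sdiff.mono_right hE)
          · intro T hT
            rw [mem_filter, mem_powerset] at hT
            rw [card_sdiff_of_subset hT.2]
        rw [hre]
        have hz := Finset.sum_powerset_neg_one_pow_card (x := S \ R)
        have hc : ((∑ m ∈ (S \ R).powerset, (-1:ℤ)^m.card : ℤ) : ℝ)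
            = ∑ m ∈ (S \ R).powerset, (-1:ℝ)^m.card := by push_cast; rfl
        rw [← hc, hz]
        by_cases hSR : S = R
        · rw [if_pos hSR, if_pos (by rw [hSR, sdiff_self]; rfl)]; norm_num
        · rw [if_neg hSR, if_neg (fun hh => hSR
            (Finset.Subset.antisymm (sdiff_eq_empty_iff_subset.1 hh) hR.1))]
          norm_num
      rw [Finset.sum_congr rfl hinner]
      rw [Finset.sum_eq_single S]
      · rw [if_pos rfl, one_mul]
      · intro R hR hRS
        rw [if_neg (fun hh => hRS hh.symm), zero_mul]
      · intro hS
        exact absurd (mem_filter.2 ⟨mem_powerset.2 (Finset.Subset.refl S), h⟩) hS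
    · intro T R
      simp only [mem_filter, mem_powerset]
      constructor
      · rintro ⟨⟨hTS, hkT⟩, ⟨hRT, hkR⟩⟩
        exact ⟨⟨hTS, hRT⟩, ⟨hRT.trans hTS, hkR⟩⟩
      · rintro ⟨⟨hTS, hRT⟩, ⟨hRS, hkR⟩⟩
        exact ⟨⟨hTS, hkR.trans (card_le_card hRT)⟩, ⟨hRT, hkR⟩⟩

lemma iterLin (Φ : (Finset (Fin n) → ℝ) → Fin n → ℝ)
    (hlin : ∀ u w : Finset (Fin n) → ℝ, u ∅ = 0 → w ∅ = 0 → ∀ γ η : ℝ, ∀ i : Fin n,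
        Φ (fun S => γ * u S + η * w S) i = γ * Φ u i + η * Φ w i)
    {ι : Type} [DecidableEq ι] (B : Finset ι) (g : ι → Finset (Fin n) → ℝ) (c : ι → ℝ)
    (hg : ∀ b ∈ B, g b ∅ = 0) (i : Fin n) :
    Φ (fun S => ∑ b ∈ B, c b * g b S) i = ∑ b ∈ B, c b * Φ (g b) i := by
  induction B using Finset.induction_on with
  | empty =>
    have h0 : (fun _ : Finset (Fin n) => (0:ℝ))
        = fun S => (0:ℝ) * (fun _ : Finset (Fin n) => (0:ℝ)) S
            + 0 * (fun _ : Finset (Fin n) => (0:ℝ)) S := by funext S; ring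
    simp only [Finset.sum_empty]
    rw [h0, hlin _ _ rfl rfl]
    ring
  | @insert a B ha ih =>
    have hw0 : (fun S => ∑ b ∈ B, c b * g b S) ∅ = 0 := by
      apply Finset.sum_eq_zero
      intro b hb
      rw [hg b (mem_insert_of_mem hb), mul_zero]
    have key : (fun S => ∑ b ∈ insert a B, c b * g b S)
        = fun S => c a * g a S + 1 * ((fun S => ∑ b ∈ B, c b * g b S) S) := by
      funext S
      rw [Finset.sum_insert ha]
      ring
    rw [key, hlin (g a) _ (hg a (mem_insert_self a B)) hw0,
      ih (fun b hb => hg b (mem_insert_of_mem hb)), Finset.sum_insert ha]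
    ring

lemma repG (k : ℕ) (hk : 1 ≤ k) (Φ : (Finset (Fin n) → ℝ) → Fin n → ℝ)
    (hlin : ∀ u w : Finset (Fin n) → ℝ, u ∅ = 0 → w ∅ = 0 → ∀ γ η : ℝ, ∀ i : Fin n,
        Φ (fun S => γ * u S + η * w S) i = γ * Φ u i + η * Φ w i)
    (v : Finset (Fin n) → ℝ) (hv : v ∅ = 0) (i : Fin n) :
    Φ v i = ∑ T ∈ idx n, coefG k v T * Φ (bas k T) i := by
  have hvrep : v = fun S => ∑ T ∈ idx n, coefG k v T * bas k T S :=
    funext (decompG k hk v hv)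
  conv_lhs => rw [hvrep]
  exact iterLin Φ hlin (idx n) (bas k) (coefG k v) (fun T hT => bas_empty k T hT) i

lemma filter_mem_univ_eq {n : ℕ} (T : Finset (Fin n)) :
    univ.filter (fun j => j ∈ T) = T := by ext x; simp

lemma pinG {n : ℕ} (k : ℕ) (hk : 1 ≤ k) (hkn : k ≤ n)
    (Φ : (Finset (Fin n) → ℝ) → Fin n → ℝ)
    (heff : ∀ v : Finset (Fin n) → ℝ, v ∅ = 0 → ∑ i, Φ v i = v Finset.univ)
    (hsym : ∀ v : Finset (Fin n) → ℝ, v ∅ = 0 → ∀ i j : Fin n,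
        (∀ S ∈ (Finset.univ \ {i, j} : Finset (Fin n)).powerset,
          v (insert i S) = v (insert j S)) → Φ v i = Φ v j)
    (hnnpp : ∀ v : Finset (Fin n) → ℝ, v ∅ = 0 → ∀ i : Fin n,
        (∀ S ∈ (Finset.univ.erase i).powerset, S.card < k → v (insert i S) = 0) →
        (∀ S ∈ (Finset.univ.erase i).powerset, k ≤ S.card → v (insert i S) = v S) →
        Φ v i = 0)
    (T : Finset (Fin n)) (hT : T ∈ idx n) (i : Fin n) :
    Φ (bas k T) i = pv k T i := by
  have hTne : T.Nonempty := (mem_filter.1 hT).2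
  have h0 : bas k T ∅ = 0 := bas_empty k T hT
  have hTpos : 0 < T.card := card_pos.2 hTne
  -- null players outside T
  have hnull : ∀ j, j ∉ T → Φ (bas k T) j = 0 := by
    intro j hj
    apply hnnpp _ h0 j
    · intro S hS hcard
      by_cases hc : T.card < k
      · rw [bas_of_lt hc]
        unfold deltaG
        rw [if_neg]
        intro hh; rw [← hh] at hj; exact hj (mem_insert_self j S)
      · rw [bas_of_le hc]
        unfold unaG
        rw [if_neg]
        intro hsub
        have hTS : T ⊆ S := by
          intro x hx
          rcases mem_insert.1 (hsub hx) with h | h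
          · exact absurd (h ▸ hx) hj
          · exact h
        have := card_le_card hTS
        omega
    · intro S hS hcard
      by_cases hc : T.card < k
      · rw [bas_of_lt hc]
        unfold deltaG
        rw [if_neg, if_neg]
        · intro hh; rw [← hh] at hc; omega
        · intro hh
          have := card_le_card (subset_insert j S)
          rw [hh] at this; omega
      · rw [bas_of_le hc]
        unfold unaG
        congr 1
        apply propext
        constructor
        · intro hsub x hx
          rcases mem_insert.1 (hsub hx) with h | h
          · exact absurd (h ▸ hx) hj
          · exact h
        · intro hsub
          exact hsub.trans (subset_insert j S)
  -- symmetry inside T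
  have hsame : ∀ p ∈ T, ∀ q ∈ T, Φ (bas k T) p = Φ (bas k T) q := by
    intro p hp q hq
    by_cases hpq : p = q
    · rw [hpq]
    apply hsym _ h0
    intro S hS
    have hsub := mem_powerset.1 hS
    have hpqS : p ∉ S ∧ q ∉ S := by
      constructor
      · intro hmem
        have h2 := hsub hmem
        rw [mem_sdiff] at h2
        exact h2.2 (by simp)
      · intro hmem
        have h2 := hsub hmem
        rw [mem_sdiff] at h2
        exact h2.2 (by simp)
    by_cases hc : T.card < k
    · rw [bas_of_lt hc]
      unfold deltaG
      rw [if_neg, if_neg]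
      · intro hh
        rcases mem_insert.1 (hh ▸ hp : p ∈ insert q S) with h | h
        · exact hpq h
        · exact hpqS.1 h
      · intro hh
        rcases mem_insert.1 (hh ▸ hq : q ∈ insert p S) with h | h
        · exact hpq h.symm
        · exact hpqS.2 h
    · rw [bas_of_le hc]
      unfold unaG
      rw [if_neg, if_neg]
      · intro hsub
        rcases mem_insert.1 (hsub hp) with h | h
        · exact hpq h
        · exact hpqS.1 h
      · intro hsub
        rcases mem_insert.1 (hsub hq) with h | h
        · exact hpq h.symm
        · exact hpqS.2 h
  -- efficiency
  obtain ⟨i₀, hi₀⟩ := hTne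
  have hsplit : ∑ j, Φ (bas k T) j = T.card * Φ (bas k T) i₀ := by
    have hall : (univ : Finset (Fin n)) = T ∪ Tᶜ := by simp
    rw [hall, Finset.sum_union disjoint_compl_right]
    rw [Finset.sum_eq_zero (fun j hj => hnull j (mem_compl.1 hj)), add_zero]
    rw [Finset.sum_congr rfl (fun j hj => hsame j hj i₀ hi₀), Finset.sum_const, nsmul_eq_mul]
  have heq := heff _ h0
  rw [hsplit] at heq
  by_cases hc : T.card < k
  · -- delta case : total is 0
    have hTuniv : ¬ ((univ : Finset (Fin n)) = T) := by
      intro hh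
      have : T.card = n := by rw [← hh]; simp [card_univ]
      omega
    have hbu : bas k T univ = 0 := by
      rw [bas_of_lt hc]; unfold deltaG; rw [if_neg hTuniv]
    rw [hbu] at heq
    have hi0 : Φ (bas k T) i₀ = 0 := by
      have hcast : (T.card : ℝ) ≠ 0 := Nat.cast_ne_zero.2 (by omega)
      rcases mul_eq_zero.1 heq with h | h
      · exact absurd h hcast
      · exact h
    have hpv : pv k T i = 0 := by
      unfold pv; rw [if_neg]; intro hh; omega
    rw [hpv]
    by_cases hiT : i ∈ T
    · rw [hsame i hiT i₀ hi₀]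
      exact hi0
    · exact hnull i hiT
  · -- una case : total is 1
    have hbu : bas k T univ = 1 := by
      rw [bas_of_le hc]; unfold unaG; rw [if_pos (subset_univ T)]
    rw [hbu] at heq
    by_cases hiT : i ∈ T
    · have hii : Φ (bas k T) i = Φ (bas k T) i₀ := hsame i hiT i₀ hi₀
      rw [hii]
      unfold pv
      rw [if_pos ⟨not_lt.1 hc, hiT⟩]
      have hcast : (T.card : ℝ) ≠ 0 := Nat.cast_ne_zero.2 (by omega)
      rw [eq_div_iff hcast]
      linarith [heq]
    · rw [hnull i hiT]
      unfold pv
      rw [if_neg (fun hh => hiT hh.2)]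

lemma natkey (t m : ℕ) (ht : 1 ≤ t) :
    t * ∑ j ∈ Finset.range (m+1), m.choose j * (m-j).factorial * (t-1+j).factorial
      = (t+m).factorial := by
  have hterm : ∀ j ∈ Finset.range (m+1),
      m.choose j * (m-j).factorial * (t-1+j).factorial
        = m.factorial * (t-1).factorial * (t-1+j).choose (t-1) := by
    intro j hj
    rw [Finset.mem_range] at hj
    have hjm : j ≤ m := by omega
    have h1 := Nat.choose_mul_factorial_mul_factorial (show t-1 ≤ t-1+j by omega)
    have h2 := Nat.choose_mul_factorial_mul_factorial hjm
    have hsub : t-1+j-(t-1) = j := by omega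
    rw [hsub] at h1
    calc m.choose j * (m-j).factorial * (t-1+j).factorial
        = m.choose j * (m-j).factorial *
            ((t-1+j).choose (t-1) * (t-1).factorial * j.factorial) := by rw [h1]
      _ = (m.choose j * j.factorial * (m-j).factorial) * (t-1).factorial
            * (t-1+j).choose (t-1) := by ring
      _ = m.factorial * (t-1).factorial * (t-1+j).choose (t-1) := by rw [h2]
  rw [Finset.sum_congr rfl hterm, ← Finset.mul_sum]
  have hhs : ∑ j ∈ Finset.range (m+1), (t-1+j).choose (t-1) = (t+m).choose t := by
    have h := Nat.sum_Icc_choose (t-1+m) (t-1)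
    rw [← Finset.Ico_add_one_right_eq_Icc, Finset.sum_Ico_eq_sum_range] at h
    have e1 : t-1+m+1-(t-1) = m+1 := by omega
    have e2 : t-1+m+1 = t+m := by omega
    have e3 : t-1+1 = t := by omega
    rw [e1, e2, e3] at h
    exact h
  rw [hhs]
  have h3 := Nat.choose_mul_factorial_mul_factorial (show t ≤ t+m by omega)
  have e4 : t+m-t = m := by omega
  rw [e4] at h3
  calc t * (m.factorial * (t-1).factorial * (t+m).choose t)
      = (t+m).choose t * (t*(t-1).factorial) * m.factorial := by ring
    _ = (t+m).choose t * t.factorial * m.factorial := by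
        rw [Nat.mul_factorial_pred (by omega)]
    _ = (t+m).factorial := h3

lemma realkey (t m : ℕ) (ht : 1 ≤ t) :
    ∑ j ∈ Finset.range (m+1), (m.choose j : ℝ) *
        (((m-j).factorial * (t-1+j).factorial : ℝ) / (t+m).factorial) = 1/t := by
  have hn := natkey t m ht
  have hcast : (t:ℝ) * ∑ j ∈ Finset.range (m+1),
      (m.choose j : ℝ) * ((m-j).factorial : ℝ) * ((t-1+j).factorial : ℝ)
      = ((t+m).factorial : ℝ) := by
    exact_mod_cast congrArg (fun x : ℕ => (x : ℝ)) hn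
  have hF : ((t+m).factorial : ℝ) ≠ 0 := Nat.cast_ne_zero.2 (Nat.factorial_ne_zero _)
  have htr : (t:ℝ) ≠ 0 := Nat.cast_ne_zero.2 (by omega)
  have hcalc : ∑ j ∈ Finset.range (m+1), (m.choose j : ℝ) *
        (((m-j).factorial * (t-1+j).factorial : ℝ) / (t+m).factorial)
      = (∑ j ∈ Finset.range (m+1),
          (m.choose j : ℝ) * ((m-j).factorial : ℝ) * ((t-1+j).factorial : ℝ))
        / (t+m).factorial := by
    rw [Finset.sum_div]
    apply Finset.sum_congr rfl
    intro j _
    ring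
  rw [hcalc]
  rw [show (∑ j ∈ Finset.range (m+1),
      (m.choose j : ℝ) * ((m-j).factorial : ℝ) * ((t-1+j).factorial : ℝ))
      = ((t+m).factorial : ℝ) / t by rw [eq_div_iff htr]; linarith [hcast]]
  field_simp
lemma kpin {n : ℕ} (k : ℕ) (hk : 1 ≤ k) (hkn : k ≤ n)
    (T : Finset (Fin n)) (hT : T ∈ idx n) (i : Fin n) :
    kSED n k (bas k T) i = pv k T i := by
  have hTne : T.Nonempty := (mem_filter.1 hT).2
  have hTpos : 0 < T.card := card_pos.2 hTne
  have hTn : T.card ≤ n := by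
    have := card_le_card (subset_univ T); simpa using this
  by_cases hc : T.card < k
  · -- delta case : value 0
    rw [bas_of_lt hc]
    unfold kSED
    have h1 : ∀ S ∈ (Finset.univ.erase i).powerset.filter (fun S => S.card = k - 1),
        (((n - k).factorial * (k - 1).factorial : ℝ) / n.factorial) * deltaG T (insert i S) = 0 := by
      intro S hS
      rw [mem_filter] at hS
      have hiS : i ∉ S := not_mem_of_ps_erase hS.1
      unfold deltaG
      rw [if_neg, mul_zero]
      intro hh
      rw [← hh, card_insert_of_notMem hiS, hS.2] at hc
      omega
    have h2 : ∀ S ∈ (Finset.univ.erase i).powerset.filter (fun S => k ≤ S.card),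
        (((n - S.card - 1).factorial * S.card.factorial : ℝ) / n.factorial) *
          (deltaG T (insert i S) - deltaG T S) = 0 := by
      intro S hS
      rw [mem_filter] at hS
      unfold deltaG
      rw [if_neg, if_neg, sub_self, mul_zero]
      · intro hh; rw [← hh] at hc; omega
      · intro hh
        have := card_le_card (subset_insert i S)
        rw [hh] at this; omega
    rw [Finset.sum_eq_zero h1, Finset.sum_eq_zero h2, add_zero]
    unfold pv
    rw [if_neg]
    rintro ⟨h, _⟩; omega
  · rw [bas_of_le hc]
    by_cases hiT : i ∈ T
    · -- main counting case
      have hkT : k ≤ T.card := not_lt.1 hc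
      have hAcard : (T.erase i).card = T.card - 1 := card_erase_of_mem hiT
      have hAsub : T.erase i ⊆ univ.erase i := erase_subset_erase i (subset_univ T)
      unfold kSED
      have hrw1 : ∀ S ∈ (Finset.univ.erase i).powerset.filter (fun S => S.card = k - 1),
          (((n - k).factorial * (k - 1).factorial : ℝ) / n.factorial) * unaG T (insert i S)
          = if T.erase i ⊆ S then
              (((n - S.card - 1).factorial * S.card.factorial : ℝ) / n.factorial) else 0 := by
        intro S hS
        rw [mem_filter] at hS
        simp only [unaG, Finset.subset_insert_iff]
        rw [mul_ite, mul_one, mul_zero, hS.2]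
        rw [show n - (k-1) - 1 = n - k from by omega]
      have hrw2 : ∀ S ∈ (Finset.univ.erase i).powerset.filter (fun S => k ≤ S.card),
          (((n - S.card - 1).factorial * S.card.factorial : ℝ) / n.factorial) *
            (unaG T (insert i S) - unaG T S)
          = if T.erase i ⊆ S then
              (((n - S.card - 1).factorial * S.card.factorial : ℝ) / n.factorial) else 0 := by
        intro S hS
        rw [mem_filter] at hS
        have hiS : i ∉ S := not_mem_of_ps_erase hS.1
        have hTS : unaG T S = 0 := by
          unfold unaG; rw [if_neg (fun hsub => hiS (hsub hiT))]
        rw [hTS, sub_zero]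
        simp only [unaG, Finset.subset_insert_iff]
        rw [mul_ite, mul_one, mul_zero]
      rw [Finset.sum_congr rfl hrw1, Finset.sum_congr rfl hrw2,
        ← Finset.sum_filter, ← Finset.sum_filter]
      have hE1 : ((Finset.univ.erase i).powerset.filter (fun S => S.card = k - 1)).filter
            (fun S => T.erase i ⊆ S)
          = ((Finset.univ.erase i).powerset.filter (fun S => T.erase i ⊆ S)).filter
            (fun S => S.card = k - 1) := by
        rw [filter_filter, filter_filter]
        exact Finset.filter_congr (fun S _ => and_comm)
      have hE2 : ((Finset.univ.erase i).powerset.filter (fun S => k ≤ S.card)).filter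
            (fun S => T.erase i ⊆ S)
          = ((Finset.univ.erase i).powerset.filter (fun S => T.erase i ⊆ S)).filter
            (fun S => ¬ S.card = k - 1) := by
        rw [filter_filter, filter_filter]
        apply Finset.filter_congr
        intro S _
        constructor
        · rintro ⟨h1, h2⟩; exact ⟨h2, by omega⟩
        · rintro ⟨h2, h1⟩
          have hcard := card_le_card h2
          rw [hAcard] at hcard
          exact ⟨by omega, h2⟩
      rw [hE1, hE2, Finset.sum_filter_add_sum_filter_not]
      have hMstep : ∑ S ∈ (Finset.univ.erase i).powerset.filter (fun S => T.erase i ⊆ S),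
            (((n - S.card - 1).factorial * S.card.factorial : ℝ) / n.factorial)
          = ∑ E ∈ ((Finset.univ.erase i) \ (T.erase i)).powerset,
              (((n - ((T.erase i).card + E.card) - 1).factorial *
                ((T.erase i).card + E.card).factorial : ℝ) / n.factorial) := by
        refine Finset.sum_nbij' (fun S => S \ (T.erase i)) (fun E => (T.erase i) ∪ E) ?_ ?_ ?_ ?_ ?_
        · intro S hS
          rw [mem_filter, mem_powerset] at hS
          exact mem_powerset.2 (sdiff_subset_sdiff hS.1 (Finset.Subset.refl _))
        · intro E hE
          rw [mem_powerset] at hE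
          exact mem_filter.2 ⟨mem_powerset.2 (union_subset hAsub (hE.trans sdiff_subset)),
            subset_union_left⟩
        · intro S hS
          rw [mem_filter, mem_powerset] at hS
          exact union_sdiff_of_subset hS.2
        · intro E hE
          rw [mem_powerset] at hE
          exact union_sdiff_cancel_left (disjoint_sdiff.mono_right hE)
        · intro S hS
          rw [mem_filter, mem_powerset] at hS
          have hle := card_le_card hS.2
          have harg : (T.erase i).card + (S \ (T.erase i)).card = S.card := by
            rw [card_sdiff_of_subset hS.2]; omega
          rw [harg]
      rw [hMstep, Finset.sum_powerset]
      have hMcard : ((Finset.univ.erase i) \ (T.erase i)).card = n - T.card := by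
        have h5 := card_sdiff_of_subset hAsub
        rw [card_erase_of_mem (mem_univ i), card_erase_of_mem hiT] at h5
        rw [h5]
        have h6 : (Finset.univ : Finset (Fin n)).card = n := by simp
        omega
      have hinner : ∀ j ∈ Finset.range (((Finset.univ.erase i) \ (T.erase i)).card + 1),
          ∑ E ∈ Finset.powersetCard j ((Finset.univ.erase i) \ (T.erase i)),
              (((n - ((T.erase i).card + E.card) - 1).factorial *
                ((T.erase i).card + E.card).factorial : ℝ) / n.factorial)
          = ((((Finset.univ.erase i) \ (T.erase i)).card.choose j : ℝ)) *
              (((n - ((T.erase i).card + j) - 1).factorial *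
                ((T.erase i).card + j).factorial : ℝ) / n.factorial) := by
        intro j hj
        rw [Finset.sum_congr rfl (fun E hE => by rw [(Finset.mem_powersetCard.1 hE).2]),
          Finset.sum_const, Finset.card_powersetCard, nsmul_eq_mul]
      rw [Finset.sum_congr rfl hinner]
      unfold pv
      rw [if_pos ⟨hkT, hiT⟩]
      have hrk := realkey T.card (n - T.card) (by omega)
      rw [show T.card + (n - T.card) = n from by omega] at hrk
      refine Eq.trans ?_ hrk
      rw [hMcard, hAcard]
      apply Finset.sum_congr rfl
      intro j hj
      rw [Finset.mem_range] at hj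
      rw [show n - (T.card - 1 + j) - 1 = n - T.card - j from by omega,
        show T.card - 1 + j = T.card - 1 + j from rfl]
    · -- i not in T : value 0
      have hkT : k ≤ T.card := not_lt.1 hc
      unfold kSED
      have h1 : ∀ S ∈ (Finset.univ.erase i).powerset.filter (fun S => S.card = k - 1),
          (((n - k).factorial * (k - 1).factorial : ℝ) / n.factorial) * unaG T (insert i S) = 0 := by
        intro S hS
        rw [mem_filter] at hS
        unfold unaG
        rw [if_neg, mul_zero]
        intro hsub
        have hTS : T ⊆ S := by
          intro x hx
          rcases mem_insert.1 (hsub hx) with h | h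
          · exact absurd (h ▸ hx) hiT
          · exact h
        have := card_le_card hTS
        omega
      have h2 : ∀ S ∈ (Finset.univ.erase i).powerset.filter (fun S => k ≤ S.card),
          (((n - S.card - 1).factorial * S.card.factorial : ℝ) / n.factorial) *
            (unaG T (insert i S) - unaG T S) = 0 := by
        intro S hS
        unfold unaG
        have hiff : T ⊆ insert i S ↔ T ⊆ S := by
          constructor
          · intro hsub x hx
            rcases mem_insert.1 (hsub hx) with h | h
            · exact absurd (h ▸ hx) hiT
            · exact h
          · intro hsub
            exact hsub.trans (subset_insert i S)
        rw [if_congr hiff rfl rfl, sub_self, mul_zero]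
      rw [Finset.sum_eq_zero h1, Finset.sum_eq_zero h2, add_zero]
      unfold pv
      rw [if_neg]
      rintro ⟨_, h⟩; exact hiT h
lemma klin {n : ℕ} (k : ℕ) (u w : Finset (Fin n) → ℝ) (γ η : ℝ) (i : Fin n) :
    kSED n k (fun S => γ * u S + η * w S) i = γ * kSED n k u i + η * kSED n k w i := by
  unfold kSED
  have h1 : ∑ S ∈ ((Finset.univ.erase i).powerset.filter (fun S => S.card = k - 1)),
      (((n - k).factorial * (k - 1).factorial : ℝ) / n.factorial) *
        (γ * u (insert i S) + η * w (insert i S))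
      = γ * ∑ S ∈ ((Finset.univ.erase i).powerset.filter (fun S => S.card = k - 1)),
          (((n - k).factorial * (k - 1).factorial : ℝ) / n.factorial) * u (insert i S)
        + η * ∑ S ∈ ((Finset.univ.erase i).powerset.filter (fun S => S.card = k - 1)),
          (((n - k).factorial * (k - 1).factorial : ℝ) / n.factorial) * w (insert i S) := by
    rw [Finset.mul_sum, Finset.mul_sum, ← Finset.sum_add_distrib]
    apply Finset.sum_congr rfl
    intro S _
    ring
  have h2 : ∑ S ∈ ((Finset.univ.erase i).powerset.filter (fun S => k ≤ S.card)),
      (((n - S.card - 1).factorial * S.card.factorial : ℝ) / n.factorial) *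
        ((γ * u (insert i S) + η * w (insert i S)) - (γ * u S + η * w S))
      = γ * ∑ S ∈ ((Finset.univ.erase i).powerset.filter (fun S => k ≤ S.card)),
          (((n - S.card - 1).factorial * S.card.factorial : ℝ) / n.factorial) *
            (u (insert i S) - u S)
        + η * ∑ S ∈ ((Finset.univ.erase i).powerset.filter (fun S => k ≤ S.card)),
          (((n - S.card - 1).factorial * S.card.factorial : ℝ) / n.factorial) *
            (w (insert i S) - w S) := by
    rw [Finset.mul_sum, Finset.mul_sum, ← Finset.sum_add_distrib]
    apply Finset.sum_congr rfl
    intro S _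
    ring
  rw [h1, h2]
  ring

lemma sum_swap_aux {n : ℕ} (v : Finset (Fin n) → ℝ) (i j : Fin n)
    (hij : ∀ S ∈ (Finset.univ \ {i, j} : Finset (Fin n)).powerset,
      v (insert i S) = v (insert j S))
    (p : ℕ → Prop) [DecidablePred p] (g : ℕ → ℝ → ℝ → ℝ) :
    ∑ S ∈ (Finset.univ.erase i).powerset.filter (fun S => p S.card),
        g S.card (v (insert i S)) (v S)
    = ∑ S ∈ (Finset.univ.erase j).powerset.filter (fun S => p S.card),
        g S.card (v (insert j S)) (v S) := by
  by_cases hji : i = j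
  · rw [hji]
  have hmem : ∀ (a b : Fin n) (S : Finset (Fin n)),
      S ∈ (Finset.univ.erase a).powerset.filter (fun S => p S.card) → a ∉ S ∧ p S.card := by
    intro a b S hS
    rw [mem_filter] at hS
    exact ⟨not_mem_of_ps_erase hS.1, hS.2⟩
  have hcardmap : ∀ (a b : Fin n) (S : Finset (Fin n)), a ∉ S → b ∈ S →
      (insert a (S.erase b)).card = S.card := by
    intro a b S haS hbS
    have hna : a ∉ S.erase b := fun h => haS (mem_of_mem_erase h)
    rw [card_insert_of_notMem hna, card_erase_of_mem hbS]
    have := card_pos.2 ⟨b, hbS⟩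
    omega
  have hsubmap : ∀ (a b : Fin n) (S : Finset (Fin n)), a ≠ b → a ∉ S →
      insert a (S.erase b) ⊆ Finset.univ.erase b := by
    intro a b S hab haS x hx
    rw [mem_erase]
    refine ⟨?_, mem_univ x⟩
    rcases mem_insert.1 hx with h | h
    · rw [h]; exact hab
    · exact (mem_erase.1 h).1
  refine Finset.sum_nbij' (fun S => if j ∈ S then insert i (S.erase j) else S)
    (fun S => if i ∈ S then insert j (S.erase i) else S) ?_ ?_ ?_ ?_ ?_
  · intro S hS
    obtain ⟨hiS, hpS⟩ := hmem i j S hS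
    beta_reduce
    by_cases hjS : j ∈ S
    · rw [if_pos hjS, mem_filter]
      refine ⟨mem_powerset.2 (hsubmap i j S hji hiS), ?_⟩
      rw [hcardmap i j S hiS hjS]
      exact hpS
    · rw [if_neg hjS, mem_filter]
      refine ⟨mem_powerset.2 (fun x hx => mem_erase.2 ⟨fun hh => hjS (hh ▸ hx), mem_univ x⟩), hpS⟩
  · intro S hS
    obtain ⟨hjS, hpS⟩ := hmem j i S hS
    beta_reduce
    by_cases hiS : i ∈ S
    · rw [if_pos hiS, mem_filter]
      refine ⟨mem_powerset.2 (hsubmap j i S (fun h => hji h.symm) hjS), ?_⟩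
      rw [hcardmap j i S hjS hiS]
      exact hpS
    · rw [if_neg hiS, mem_filter]
      refine ⟨mem_powerset.2 (fun x hx => mem_erase.2 ⟨fun hh => hiS (hh ▸ hx), mem_univ x⟩), hpS⟩
  · intro S hS
    obtain ⟨hiS, _⟩ := hmem i j S hS
    beta_reduce
    by_cases hjS : j ∈ S
    · rw [if_pos hjS, if_pos (mem_insert_self i _)]
      rw [Finset.erase_insert (fun h => hiS (mem_of_mem_erase h)), Finset.insert_erase hjS]
    · rw [if_neg hjS, if_neg hiS]
  · intro S hS
    obtain ⟨hjS, _⟩ := hmem j i S hS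
    beta_reduce
    by_cases hiS : i ∈ S
    · rw [if_pos hiS, if_pos (mem_insert_self j _)]
      rw [Finset.erase_insert (fun h => hjS (mem_of_mem_erase h)), Finset.insert_erase hiS]
    · rw [if_neg hiS, if_neg hjS]
  · intro S hS
    obtain ⟨hiS, _⟩ := hmem i j S hS
    beta_reduce
    by_cases hjS : j ∈ S
    · rw [if_pos hjS]
      have he : S.erase j ∈ (Finset.univ \ {i, j} : Finset (Fin n)).powerset := by
        rw [mem_powerset]
        intro x hx
        rw [mem_sdiff]
        refine ⟨mem_univ x, ?_⟩
        intro hmem2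
        rcases mem_insert.1 hmem2 with h | h
        · exact hiS (h ▸ mem_of_mem_erase hx)
        · exact (mem_erase.1 hx).1 (by simpa using h)
      have e1 : (insert i (S.erase j)).card = S.card := hcardmap i j S hiS hjS
      have e2 : v (insert j (insert i (S.erase j))) = v (insert i S) := by
        rw [Finset.insert_comm, Finset.insert_erase hjS]
      have e3 : v (insert i (S.erase j)) = v S := by
        rw [hij _ he, Finset.insert_erase hjS]
      rw [e1, e2, e3]
    · rw [if_neg hjS]
      have he : S ∈ (Finset.univ \ {i, j} : Finset (Fin n)).powerset := by
        rw [mem_powerset]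
        intro x hx
        rw [mem_sdiff]
        refine ⟨mem_univ x, ?_⟩
        intro hmem2
        rcases mem_insert.1 hmem2 with h | h
        · exact hiS (h ▸ hx)
        · exact hjS ((by simpa using h : x = j) ▸ hx)
      rw [hij _ he]

lemma ksym {n : ℕ} (k : ℕ) (v : Finset (Fin n) → ℝ) (i j : Fin n)
    (hij : ∀ S ∈ (Finset.univ \ {i, j} : Finset (Fin n)).powerset,
      v (insert i S) = v (insert j S)) :
    kSED n k v i = kSED n k v j := by
  have h1 := sum_swap_aux v i j hij (fun c => c = k - 1)
    (fun c a b => (((n - k).factorial * (k - 1).factorial : ℝ) / n.factorial) * a)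
  have h2 := sum_swap_aux v i j hij (fun c => k ≤ c)
    (fun c a b => (((n - c - 1).factorial * c.factorial : ℝ) / n.factorial) * (a - b))
  exact congrArg₂ HAdd.hAdd h1 h2

lemma knnpp {n : ℕ} (k : ℕ) (hk : 1 ≤ k) (v : Finset (Fin n) → ℝ) (i : Fin n)
    (h1 : ∀ S ∈ (Finset.univ.erase i).powerset, S.card < k → v (insert i S) = 0)
    (h2 : ∀ S ∈ (Finset.univ.erase i).powerset, k ≤ S.card → v (insert i S) = v S) :
    kSED n k v i = 0 := by
  unfold kSED
  have z1 : ∑ S ∈ ((Finset.univ.erase i).powerset.filter (fun S => S.card = k - 1)),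
      (((n - k).factorial * (k - 1).factorial : ℝ) / n.factorial) * v (insert i S) = 0 := by
    apply Finset.sum_eq_zero
    intro S hS
    rw [mem_filter] at hS
    have := hS.2
    rw [h1 S hS.1 (by omega), mul_zero]
  have z2 : ∑ S ∈ ((Finset.univ.erase i).powerset.filter (fun S => k ≤ S.card)),
      (((n - S.card - 1).factorial * S.card.factorial : ℝ) / n.factorial) *
        (v (insert i S) - v S) = 0 := by
    apply Finset.sum_eq_zero
    intro S hS
    rw [mem_filter] at hS
    rw [h2 S hS.1 hS.2, sub_self, mul_zero]
  rw [z1, z2, add_zero]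

lemma krep {n : ℕ} (k : ℕ) (hk : 1 ≤ k) (hkn : k ≤ n)
    (v : Finset (Fin n) → ℝ) (hv : v ∅ = 0) (i : Fin n) :
    kSED n k v i = ∑ T ∈ idx n, coefG k v T * pv k T i := by
  rw [repG k hk (kSED n k) (fun u w _ _ γ η i => klin k u w γ η i) v hv i]
  exact Finset.sum_congr rfl (fun T hT => by rw [kpin k hk hkn T hT i])

lemma keff {n : ℕ} (k : ℕ) (hk : 1 ≤ k) (hkn : k ≤ n)
    (v : Finset (Fin n) → ℝ) (hv : v ∅ = 0) :
    ∑ i, kSED n k v i = v Finset.univ := by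
  rw [Finset.sum_congr rfl (fun i _ => krep k hk hkn v hv i), Finset.sum_comm,
    decompG k hk v hv Finset.univ]
  apply Finset.sum_congr rfl
  intro T hT
  have hTne : T.Nonempty := (mem_filter.1 hT).2
  have hTpos : 0 < T.card := card_pos.2 hTne
  rw [← Finset.mul_sum]
  congr 1
  by_cases hc : T.card < k
  · rw [bas_of_lt hc]
    unfold pv deltaG
    rw [Finset.sum_eq_zero, if_neg]
    · intro hh
      have : T.card = n := by rw [← hh]; simp [card_univ]
      omega
    · intro x _
      rw [if_neg]
      rintro ⟨h, _⟩; omega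
  · rw [bas_of_le hc]
    unfold pv unaG
    rw [if_pos (subset_univ T)]
    have hsimp : ∀ x ∈ (Finset.univ : Finset (Fin n)),
        (if k ≤ T.card ∧ x ∈ T then 1/(T.card:ℝ) else 0)
          = if x ∈ T then 1/(T.card:ℝ) else 0 := by
      intro x _
      by_cases h : x ∈ T
      · rw [if_pos ⟨not_lt.1 hc, h⟩, if_pos h]
      · rw [if_neg (fun hh => h hh.2), if_neg h]
    rw [Finset.sum_congr rfl hsimp, Finset.sum_ite_mem, univ_inter, Finset.sum_const,
      nsmul_eq_mul]
    rw [mul_one_div, div_self (Nat.cast_ne_zero.2 (by omega))]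

/-- a value satisfies Eff, Sym, Lin and the `k`-NNPP
iff it is the `k`-SED value. -/
theorem kSED_characterization_ESL_NNPP (n k : ℕ) (hn : 1 ≤ n) (hk : 1 ≤ k) (hkn : k ≤ n)
    (Φ : (Finset (Fin n) → ℝ) → Fin n → ℝ) :
    ((∀ v : Finset (Fin n) → ℝ, v ∅ = 0 → ∑ i, Φ v i = v Finset.univ) ∧
     (∀ v : Finset (Fin n) → ℝ, v ∅ = 0 → ∀ i j : Fin n,
        (∀ S ∈ (Finset.univ \ {i, j} : Finset (Fin n)).powerset,
          v (insert i S) = v (insert j S)) → Φ v i = Φ v j) ∧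
     (∀ u w : Finset (Fin n) → ℝ, u ∅ = 0 → w ∅ = 0 → ∀ γ η : ℝ, ∀ i : Fin n,
        Φ (fun S => γ * u S + η * w S) i = γ * Φ u i + η * Φ w i) ∧
     (∀ v : Finset (Fin n) → ℝ, v ∅ = 0 → ∀ i : Fin n,
        (∀ S ∈ (Finset.univ.erase i).powerset, S.card < k → v (insert i S) = 0) →
        (∀ S ∈ (Finset.univ.erase i).powerset, k ≤ S.card → v (insert i S) = v S) →
        Φ v i = 0))
    ↔ (∀ v : Finset (Fin n) → ℝ, v ∅ = 0 → ∀ i : Fin n, Φ v i = kSED n k v i) := by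
  constructor
  · rintro ⟨heff, hsym, hlin, hnnpp⟩ v hv i
    rw [repG k hk Φ hlin v hv i, krep k hk hkn v hv i]
    exact Finset.sum_congr rfl (fun T hT => by
      rw [pinG k hk hkn Φ heff hsym hnnpp T hT i])
  · intro H
    refine ⟨?_, ?_, ?_, ?_⟩
    · intro v hv
      rw [Finset.sum_congr rfl (fun i _ => H v hv i)]
      exact keff k hk hkn v hv
    · intro v hv i j hij
      rw [H v hv i, H v hv j]
      exact ksym k v i j hij
    · intro u w hu hw γ η i
      rw [H _ (by show γ * u ∅ + η * w ∅ = 0; rw [hu, hw]; ring) i, H u hu i, H w hw i]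
      exact klin k u w γ η i
    · intro v hv i h1 h2
      rw [H v hv i]
      exact knnpp k hk v i h1 h2
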